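/- arXiv:1704.03512 — 2 statements merged into one kernel-verified Lean document; each statement's English description precedes it below -/
import Mathlib

section
/- The Clifford-Gegenbauer polynomials defined by G_{0,m,α} = 1 and the recurrence G_{ℓ+1,m,α}(x) = -2(α-ℓ) x G_{ℓ,m,α}(x) - (1+|x|²) ∂G_{ℓ,m,α}(x) satisfy the Rodrigues formula G_{ℓ,m,α}(x) = (-1)^ℓ (1+|x|²)^{ℓ-α} ∂^ℓ((1+|x|²)^α) for all ℓ ≥ 0. -/
open CliffordAlgebra MeasureTheory

noncomputable section

/-- The negative-definite quadratic form `x ↦ -Σ_j x_j²` on `ℝ^m`. -/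
def Qneg (m : ℕ) : QuadraticForm ℝ (Fin m → ℝ) :=
  -(QuadraticMap.weightedSumSquares ℝ (fun _ : Fin m => (1:ℝ)))

/-- The real Clifford algebra `Cl(m)` with `e_j² = -1` and anticommuting generators. -/
abbrev Cl (m : ℕ) := CliffordAlgebra (Qneg m)

/-- The generators `e_j = ι(e_j)`. -/
def e (m : ℕ) (j : Fin m) : Cl m := ι (Qneg m) (Pi.single j 1)

/-- A fixed basis of the Clifford algebra, used to differentiate (and integrate)
Clifford-algebra-valued functions componentwise. -/
def clBasis (m : ℕ) : Module.Basis (Module.Basis.ofVectorSpaceIndex ℝ (Cl m)) ℝ (Cl m) :=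
  Module.Basis.ofVectorSpace ℝ (Cl m)

/-- The partial derivative `∂_{x_j}` of a Clifford-algebra-valued function,
computed componentwise with respect to a fixed basis. -/
def pderiv (m : ℕ) (j : Fin m) (g : (Fin m → ℝ) → Cl m) (x : Fin m → ℝ) : Cl m :=
  ∑ᶠ i, (fderiv ℝ (fun y => (clBasis m).repr (g y) i) x (Pi.single j 1)) • clBasis m i

/-- The Dirac operator `∂ = Σ_j e_j ∂_{x_j}` (left Clifford multiplication). -/
def dirac (m : ℕ) (g : (Fin m → ℝ) → Cl m) : (Fin m → ℝ) → Cl m :=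
  fun x => ∑ j, e m j * pderiv m j g x

/-- The general Clifford-Gegenbauer polynomials, defined by `G_0 = 1` and the
recurrence `G_{ℓ+1}(x) = -2(α-ℓ) x G_ℓ(x) - (1+|x|²) ∂G_ℓ(x)`. -/
def G (m : ℕ) (α : ℝ) : ℕ → (Fin m → ℝ) → Cl m
  | 0 => fun _ => 1
  | (ℓ + 1) => fun x =>
      (-(2 * (α - (ℓ : ℝ)))) • (ι (Qneg m) x * G m α ℓ x)
        - (1 + ∑ j, x j ^ 2) • dirac m (G m α ℓ) x

/-! ### Auxiliary machinery -/

local notation "T∞" => ((⊤:ℕ∞) : WithTop ℕ∞)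

def NN (m : ℕ) (x : Fin m → ℝ) : ℝ := 1 + ∑ j, x j ^ 2

lemma NN_pos (m : ℕ) (x : Fin m → ℝ) : 0 < NN m x := by
  have : (0:ℝ) ≤ ∑ j, x j ^ 2 := Finset.sum_nonneg fun j _ => sq_nonneg _
  unfold NN; linarith

lemma NN_contDiff (m : ℕ) : ContDiff ℝ T∞ (NN m) := by
  unfold NN
  exact contDiff_const.add (ContDiff.sum fun j _ =>
    ((ContinuousLinearMap.proj j : (Fin m → ℝ) →L[ℝ] ℝ).contDiff).pow 2)

def DN (m : ℕ) (x : Fin m → ℝ) : (Fin m → ℝ) →L[ℝ] ℝ :=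
  ∑ j, (2 * x j) • (ContinuousLinearMap.proj j)

lemma hasFDerivAt_NN (m : ℕ) (x : Fin m → ℝ) : HasFDerivAt (NN m) (DN m x) x := by
  have h : ∀ j : Fin m, HasFDerivAt (fun y : Fin m → ℝ => y j ^ 2)
      ((2 * x j) • (ContinuousLinearMap.proj j : (Fin m → ℝ) →L[ℝ] ℝ)) x := by
    intro j
    have hp := (ContinuousLinearMap.proj j : (Fin m → ℝ) →L[ℝ] ℝ).hasFDerivAt (x := x)
    have := hp.fun_mul hp
    simp only [ContinuousLinearMap.proj_apply] at this
    have h2 : (fun y : Fin m → ℝ => y j * y j) = fun y => y j ^ 2 := by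
      funext y; ring
    rw [h2] at this
    rw [two_mul, add_smul]
    exact this
  have hs := HasFDerivAt.fun_sum (fun j (_ : j ∈ Finset.univ) => h j)
  exact hs.const_add 1

lemma DN_apply (m : ℕ) (x : Fin m → ℝ) (j : Fin m) : DN m x (Pi.single j 1) = 2 * x j := by
  classical
  simp only [DN, ContinuousLinearMap.sum_apply, ContinuousLinearMap.smul_apply,
    ContinuousLinearMap.proj_apply, smul_eq_mul, Pi.single_apply]
  rw [Finset.sum_eq_single j]
  · simp
  · intro b _ hbj
    simp [if_neg hbj]
  · simp

lemma NN_rpow_contDiff (m : ℕ) (β : ℝ) : ContDiff ℝ T∞ (fun y => NN m y ^ β) := by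
  rw [contDiff_iff_contDiffAt]
  intro x
  exact (NN_contDiff m).contDiffAt.rpow_const_of_ne (NN_pos m x).ne'

lemma finsum_repr (m : ℕ) (z : Cl m) :
    ∑ᶠ i, (clBasis m).repr z i • clBasis m i = z := by
  classical
  rw [finsum_eq_finset_sum_of_support_subset _ (s := ((clBasis m).repr z).support)]
  · have h := (clBasis m).linearCombination_repr z
    rw [Finsupp.linearCombination_apply, Finsupp.sum] at h
    exact h
  · intro i hi
    simp only [Function.mem_support, ne_eq] at hi
    simp only [Finset.coe_sort_coe, Finset.mem_coe, Finsupp.mem_support_iff]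
    intro h0
    exact hi (by rw [h0, zero_smul])

lemma pderiv_rep {ι : Type} [Fintype ι] (m : ℕ) (f : ι → (Fin m → ℝ) → ℝ) (v : ι → Cl m)
    (hf : ∀ k, Differentiable ℝ (f k)) (j : Fin m) (x : Fin m → ℝ) :
    pderiv m j (fun y => ∑ k, f k y • v k) x
      = ∑ k, (fderiv ℝ (f k) x (Pi.single j 1)) • v k := by
  classical
  unfold pderiv
  have hcoord : ∀ i : Module.Basis.ofVectorSpaceIndex ℝ (Cl m),
      (fun y => (clBasis m).repr (∑ k, f k y • v k) i)
        = fun y => ∑ k, (clBasis m).repr (v k) i * f k y := by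
    intro i; funext y
    simp [map_sum, _root_.map_smul, Finsupp.smul_apply, mul_comm]
  have hder : ∀ i, fderiv ℝ (fun y => ∑ k, (clBasis m).repr (v k) i * f k y) x (Pi.single j 1)
      = ∑ k, (clBasis m).repr (v k) i * fderiv ℝ (f k) x (Pi.single j 1) := by
    intro i
    have h : HasFDerivAt (fun y => ∑ k, (clBasis m).repr (v k) i * f k y)
        (∑ k, (clBasis m).repr (v k) i • fderiv ℝ (f k) x) x :=
      HasFDerivAt.fun_sum fun k _ => ((hf k x).hasFDerivAt).const_mul _
    rw [h.fderiv]
    simp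
  calc (∑ᶠ i, (fderiv ℝ (fun y => (clBasis m).repr (∑ k, f k y • v k) i) x (Pi.single j 1)) • clBasis m i)
      = ∑ᶠ i, ∑ k, ((fderiv ℝ (f k) x (Pi.single j 1)) * (clBasis m).repr (v k) i) • clBasis m i := by
        apply finsum_congr; intro i
        rw [hcoord i, hder i, Finset.sum_smul]
        congr 1; funext k; ring_nf
    _ = ∑ k, ∑ᶠ i, ((fderiv ℝ (f k) x (Pi.single j 1)) * (clBasis m).repr (v k) i) • clBasis m i := by
        apply finsum_sum_comm
        intro k _
        apply Set.Finite.subset ((clBasis m).repr (v k)).finite_support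
        intro i hi
        simp only [Function.mem_support, ne_eq] at hi ⊢
        intro h0
        exact hi (by simp [h0])
    _ = ∑ k, (fderiv ℝ (f k) x (Pi.single j 1)) • v k := by
        apply Finset.sum_congr rfl
        intro k _
        have : ∀ i, ((fderiv ℝ (f k) x (Pi.single j 1)) * (clBasis m).repr (v k) i) • clBasis m i
            = (fderiv ℝ (f k) x (Pi.single j 1)) • ((clBasis m).repr (v k) i • clBasis m i) := by
          intro i; rw [smul_smul]
        rw [finsum_congr this, ← smul_finsum, finsum_repr]

lemma dirac_rep {ι : Type} [Fintype ι] (m : ℕ) (f : ι → (Fin m → ℝ) → ℝ) (v : ι → Cl m)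
    (hf : ∀ k, Differentiable ℝ (f k)) (x : Fin m → ℝ) :
    dirac m (fun y => ∑ k, f k y • v k) x
      = ∑ k, ∑ j, (fderiv ℝ (f k) x (Pi.single j 1)) • (e m j * v k) := by
  unfold dirac
  rw [Finset.sum_comm]
  apply Finset.sum_congr rfl
  intro j _
  rw [pderiv_rep m f v hf j x, Finset.mul_sum]
  apply Finset.sum_congr rfl
  intro k _
  rw [mul_smul_comm]

lemma iota_eq (m : ℕ) (x : Fin m → ℝ) : ι (Qneg m) x = ∑ j, x j • e m j := by
  have hx : x = ∑ j, x j • (Pi.single j (1:ℝ) : Fin m → ℝ) := by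
    funext i
    simp [Pi.single_apply, Finset.sum_apply]
  conv_lhs => rw [hx]
  rw [map_sum]
  apply Finset.sum_congr rfl
  intro j _
  rw [_root_.map_smul]
  rfl

lemma iota_mul_rep {ιT : Type} [Fintype ιT] (m : ℕ) (f : ιT → (Fin m → ℝ) → ℝ) (v : ιT → Cl m)
    (x : Fin m → ℝ) :
    ι (Qneg m) x * (∑ k, f k x • v k) = ∑ k, ∑ j, (x j * f k x) • (e m j * v k) := by
  rw [iota_eq, Finset.sum_mul, Finset.sum_comm]
  apply Finset.sum_congr rfl
  intro j _
  rw [smul_mul_assoc, Finset.mul_sum, Finset.smul_sum]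
  apply Finset.sum_congr rfl
  intro k _
  rw [mul_smul_comm, smul_smul]

theorem main_ind (m : ℕ) (α : ℝ) (ℓ : ℕ) :
    ∃ (ιT : Type) (_ : Fintype ιT) (f : ιT → (Fin m → ℝ) → ℝ) (v : ιT → Cl m),
      (∀ k, ContDiff ℝ T∞ (f k)) ∧ (∀ y, G m α ℓ y = ∑ k, f k y • v k) ∧
      (∀ x, (dirac m)^[ℓ] (fun y => algebraMap ℝ (Cl m) (NN m y ^ α)) x
          = ((-1:ℝ)^ℓ * NN m x ^ (α - (ℓ:ℝ))) • G m α ℓ x) := by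
  induction ℓ with
  | zero =>
      refine ⟨Unit, inferInstance, fun _ _ => 1, fun _ => (1:Cl m),
        fun _ => contDiff_const, ?_, ?_⟩
      · intro y; simp [G]
      · intro x
        simp only [Function.iterate_zero, id_eq, Nat.cast_zero, pow_zero, one_mul, sub_zero, G]
        rw [Algebra.algebraMap_eq_smul_one]
  | succ ℓ IH =>
      obtain ⟨ιT, instF, f, v, hf, hG, hR⟩ := IH
      have hfd : ∀ k, Differentiable ℝ (f k) := fun k => (hf k).differentiable (by simp)
      have hGfun : G m α ℓ = fun y => ∑ k, f k y • v k := funext hG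
      have hdG : ∀ x, dirac m (G m α ℓ) x
          = ∑ k, ∑ j, (fderiv ℝ (f k) x (Pi.single j 1)) • (e m j * v k) := by
        intro x; rw [hGfun]; exact dirac_rep m f v hfd x
      have hiG : ∀ x, ι (Qneg m) x * G m α ℓ x
          = ∑ k, ∑ j, (x j * f k x) • (e m j * v k) := by
        intro x; rw [hG x]; exact iota_mul_rep m f v x
      have hGsucc : ∀ x, G m α (ℓ+1) x
          = ∑ k, ∑ j, ((-(2*(α-(ℓ:ℝ)))) * (x j * f k x)
              - NN m x * (fderiv ℝ (f k) x (Pi.single j 1))) • (e m j * v k) := by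
        intro x
        show (-(2 * (α - (ℓ : ℝ)))) • (ι (Qneg m) x * G m α ℓ x)
            - (1 + ∑ j, x j ^ 2) • dirac m (G m α ℓ) x = _
        rw [hiG x, hdG x]
        have hN : (1 + ∑ j, x j ^ 2) = NN m x := rfl
        rw [hN, Finset.smul_sum, Finset.smul_sum, ← Finset.sum_sub_distrib]
        refine Finset.sum_congr rfl fun k _ => ?_
        rw [Finset.smul_sum, Finset.smul_sum, ← Finset.sum_sub_distrib]
        refine Finset.sum_congr rfl fun j _ => ?_
        rw [smul_smul, smul_smul, ← sub_smul]
      -- the function (dirac m)^[ℓ] W, in representation form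
      have hFrep : (dirac m)^[ℓ] (fun y => algebraMap ℝ (Cl m) (NN m y ^ α))
          = fun y => ∑ k, ((-1:ℝ)^ℓ * (NN m y ^ (α-(ℓ:ℝ)) * f k y)) • v k := by
        funext y
        rw [hR y, hG y, Finset.smul_sum]
        refine Finset.sum_congr rfl fun k _ => ?_
        rw [smul_smul, mul_assoc]
      have hg : ∀ k, Differentiable ℝ (fun y => (-1:ℝ)^ℓ * (NN m y ^ (α-(ℓ:ℝ)) * f k y)) := by
        intro k
        exact (((NN_rpow_contDiff m (α-(ℓ:ℝ))).differentiable (by simp)).mul (hfd k)).const_mul _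
      have hgder : ∀ (x : Fin m → ℝ) (k : ιT) (j : Fin m),
          fderiv ℝ (fun y => (-1:ℝ)^ℓ * (NN m y ^ (α-(ℓ:ℝ)) * f k y)) x (Pi.single j 1)
            = (-1:ℝ)^ℓ * (NN m x ^ (α-(ℓ:ℝ)) * fderiv ℝ (f k) x (Pi.single j 1)
                + f k x * ((α-(ℓ:ℝ)) * NN m x ^ (α-(ℓ:ℝ)-1) * (2 * x j))) := by
        intro x k j
        have h1 : HasFDerivAt (fun y => NN m y ^ (α-(ℓ:ℝ)))
            (((α-(ℓ:ℝ)) * NN m x ^ (α-(ℓ:ℝ)-1)) • DN m x) x :=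
          (hasFDerivAt_NN m x).rpow_const (Or.inl (NN_pos m x).ne')
        have h2 : HasFDerivAt (f k) (fderiv ℝ (f k) x) x := (hfd k x).hasFDerivAt
        have h3 := (h1.fun_mul h2).const_mul ((-1:ℝ)^ℓ)
        rw [h3.fderiv]
        simp only [ContinuousLinearMap.smul_apply, ContinuousLinearMap.add_apply,
          DN_apply, smul_eq_mul]
        try ring
      refine ⟨ιT × Fin m, inferInstance,
        (fun kj y => (-(2*(α-(ℓ:ℝ)))) * (y kj.2 * f kj.1 y)
            - NN m y * (fderiv ℝ (f kj.1) y (Pi.single kj.2 1))),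
        (fun kj => e m kj.2 * v kj.1), ?_, ?_, ?_⟩
      · rintro ⟨k, j⟩
        refine ContDiff.sub ?_ ?_
        · exact contDiff_const.mul
            (((ContinuousLinearMap.proj j : (Fin m → ℝ) →L[ℝ] ℝ).contDiff).mul (hf k))
        · exact (NN_contDiff m).mul
            (((contDiff_infty_iff_fderiv.mp (hf k)).2).clm_apply contDiff_const)
      · intro y
        rw [hGsucc y]
        exact (Fintype.sum_prod_type (fun kj : ιT × Fin m =>
          ((-(2*(α-(ℓ:ℝ)))) * (y kj.2 * f kj.1 y)
            - NN m y * (fderiv ℝ (f kj.1) y (Pi.single kj.2 1))) • (e m kj.2 * v kj.1))).symm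
      · intro x
        rw [Function.iterate_succ_apply', hFrep,
          dirac_rep m (fun k y => (-1:ℝ)^ℓ * (NN m y ^ (α-(ℓ:ℝ)) * f k y)) v hg x,
          hGsucc x, Finset.smul_sum]
        refine Finset.sum_congr rfl fun k _ => ?_
        rw [Finset.smul_sum]
        refine Finset.sum_congr rfl fun j _ => ?_
        rw [hgder x k j, smul_smul]
        congr 1
        push_cast
        have hmulN : NN m x ^ (α-(ℓ:ℝ)-1) * NN m x = NN m x ^ (α-(ℓ:ℝ)) := by
          rw [← Real.rpow_add_one (NN_pos m x).ne', sub_add_cancel]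
        have hsub : α - ((ℓ:ℝ)+1) = α-(ℓ:ℝ)-1 := by ring
        rw [hsub, ← hmulN]
        ring

/-- the Rodrigues formula
`G_ℓ(x) = (-1)^ℓ (1+|x|²)^{ℓ-α} ∂^ℓ((1+|x|²)^α)`. -/
theorem G_rodrigues (m : ℕ) (α : ℝ) (ℓ : ℕ) (x : Fin m → ℝ) :
    G m α ℓ x =
      ((-1 : ℝ) ^ ℓ * (1 + ∑ j, x j ^ 2) ^ ((ℓ : ℝ) - α)) •
        (dirac m)^[ℓ] (fun y => algebraMap ℝ (Cl m) ((1 + ∑ j, y j ^ 2) ^ α)) x := by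
  obtain ⟨ιT, _, f, v, hf, hG, hR⟩ := main_ind m α ℓ
  show G m α ℓ x = ((-1:ℝ)^ℓ * NN m x ^ ((ℓ:ℝ) - α)) •
      (dirac m)^[ℓ] (fun y => algebraMap ℝ (Cl m) (NN m y ^ α)) x
  rw [hR x, smul_smul]
  have h1 : (-1:ℝ)^ℓ * (-1:ℝ)^ℓ = 1 := by
    rw [← mul_pow]; norm_num
  have h2 : NN m x ^ ((ℓ:ℝ)-α) * NN m x ^ (α-(ℓ:ℝ)) = 1 := by
    rw [← Real.rpow_add (NN_pos m x),
      show ((ℓ:ℝ)-α)+(α-(ℓ:ℝ)) = 0 by ring, Real.rpow_zero]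
  rw [mul_mul_mul_comm, h1, h2, one_mul, one_smul]
end
end

section
/- The Chebyshev polynomials of the first kind satisfy the Rodrigues-type formula T_n(x) = (2^n (-1)^n n! / (2n)!) (1-x²)^{1/2} dⁿ/dxⁿ[(1-x²)^{n-1/2}] for -1 < x < 1, where T_n is characterized by T_n(cos θ) = cos(nθ). -/
open Real Finset

noncomputable section

lemma hasDerivAt_one_sub_rpow (q : ℝ) {x : ℝ} (h : x < 1) :
    HasDerivAt (fun y : ℝ => (1 - y) ^ q) (-(q * (1 - x) ^ (q - 1))) x := by
  have h0 : (1 : ℝ) - x ≠ 0 := by nlinarith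
  have h1 : HasDerivAt (fun y : ℝ => 1 - y) (-1) x := (hasDerivAt_id x).const_sub 1
  have := (Real.hasDerivAt_rpow_const (x := 1 - x) (p := q) (Or.inl h0)).comp x h1
  exact this.congr_deriv (by ring)

lemma hasDerivAt_one_add_rpow (q : ℝ) {x : ℝ} (h : -1 < x) :
    HasDerivAt (fun y : ℝ => (1 + y) ^ q) (q * (1 + x) ^ (q - 1)) x := by
  have h0 : (1 : ℝ) + x ≠ 0 := by nlinarith
  have h1 : HasDerivAt (fun y : ℝ => 1 + y) 1 x := (hasDerivAt_id x).const_add 1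
  have := (Real.hasDerivAt_rpow_const (x := 1 + x) (p := q) (Or.inl h0)).comp x h1
  exact this.congr_deriv (by ring)

lemma iter_one_sub (p : ℝ) : ∀ (k : ℕ) {x : ℝ}, x < 1 →
    iteratedDeriv k (fun t : ℝ => (1 - t) ^ p) x
      = (-1) ^ k * (∏ j ∈ range k, (p - j)) * (1 - x) ^ (p - k) := by
  intro k
  induction k with
  | zero => intro x hx; simp
  | succ k ih =>
    intro x hx
    rw [iteratedDeriv_succ]
    have hev : iteratedDeriv k (fun t : ℝ => (1 - t) ^ p)
        =ᶠ[nhds x] fun y => (-1) ^ k * (∏ j ∈ range k, (p - j)) * (1 - y) ^ (p - k) := by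
      filter_upwards [Iio_mem_nhds hx] with y hy
      exact ih hy
    rw [hev.deriv_eq]
    have hd := (hasDerivAt_one_sub_rpow (p - k) hx).const_mul
      ((-1 : ℝ) ^ k * (∏ j ∈ range k, (p - j)))
    rw [hd.deriv, prod_range_succ]
    rw [show p - (k : ℝ) - 1 = p - ((k : ℕ) + 1 : ℕ) by push_cast; ring]
    ring

lemma iter_one_add (p : ℝ) : ∀ (k : ℕ) {x : ℝ}, -1 < x →
    iteratedDeriv k (fun t : ℝ => (1 + t) ^ p) x
      = (∏ j ∈ range k, (p - j)) * (1 + x) ^ (p - k) := by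
  intro k
  induction k with
  | zero => intro x hx; simp
  | succ k ih =>
    intro x hx
    rw [iteratedDeriv_succ]
    have hev : iteratedDeriv k (fun t : ℝ => (1 + t) ^ p)
        =ᶠ[nhds x] fun y => (∏ j ∈ range k, (p - j)) * (1 + y) ^ (p - k) := by
      filter_upwards [Ioi_mem_nhds hx] with y hy
      exact ih hy
    rw [hev.deriv_eq]
    have hd := (hasDerivAt_one_add_rpow (p - k) hx).const_mul (∏ j ∈ range k, (p - j))
    rw [hd.deriv, prod_range_succ]
    rw [show p - (k : ℝ) - 1 = p - ((k : ℕ) + 1 : ℕ) by push_cast; ring]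
    ring



lemma leibniz_aux {U : Set ℝ} (hU : IsOpen U) (f g : ℝ → ℝ)
    (hf : ∀ k, ∀ x ∈ U, DifferentiableAt ℝ (iteratedDeriv k f) x)
    (hg : ∀ k, ∀ x ∈ U, DifferentiableAt ℝ (iteratedDeriv k g) x) :
    ∀ (n : ℕ), ∀ x ∈ U, iteratedDeriv n (fun t => f t * g t) x
      = ∑ i ∈ range (n + 1),
          (n.choose i : ℝ) * (iteratedDeriv i f x * iteratedDeriv (n - i) g x) := by
  intro n
  induction n with
  | zero => intro x hx; simp [iteratedDeriv_zero]
  | succ n ih =>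
    intro x hx
    rw [iteratedDeriv_succ]
    have hev : iteratedDeriv n (fun t => f t * g t) =ᶠ[nhds x]
        fun y => ∑ i ∈ range (n + 1),
          (n.choose i : ℝ) * (iteratedDeriv i f y * iteratedDeriv (n - i) g y) := by
      filter_upwards [hU.mem_nhds hx] with y hy
      exact ih y hy
    rw [hev.deriv_eq]
    have hd : HasDerivAt (fun y => ∑ i ∈ range (n + 1),
          (n.choose i : ℝ) * (iteratedDeriv i f y * iteratedDeriv (n - i) g y))
        (∑ i ∈ range (n + 1), (n.choose i : ℝ) *
          (iteratedDeriv (i + 1) f x * iteratedDeriv (n - i) g x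
            + iteratedDeriv i f x * iteratedDeriv (n - i + 1) g x)) x := by
      refine HasDerivAt.fun_sum fun i _ => ?_
      have h1 : HasDerivAt (iteratedDeriv i f) (iteratedDeriv (i + 1) f x) x := by
        rw [iteratedDeriv_succ]; exact (hf i x hx).hasDerivAt
      have h2 : HasDerivAt (iteratedDeriv (n - i) g) (iteratedDeriv (n - i + 1) g x) x := by
        rw [iteratedDeriv_succ]; exact (hg (n - i) x hx).hasDerivAt
      simpa [mul_add] using ((h1.mul h2).const_mul ((n.choose i : ℝ)))
    rw [hd.deriv]
    -- combinatorial reshuffle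
    set u : ℕ → ℝ := fun i => iteratedDeriv i f x
    set v : ℕ → ℝ := fun i => iteratedDeriv i g x
    have hsplit : ∑ i ∈ range (n + 1), (n.choose i : ℝ) *
          (u (i + 1) * v (n - i) + u i * v (n - i + 1))
        = (∑ i ∈ range (n + 1), (n.choose i : ℝ) * (u (i + 1) * v (n - i)))
          + ∑ i ∈ range (n + 1), (n.choose i : ℝ) * (u i * v (n + 1 - i)) := by
      rw [← sum_add_distrib]
      refine sum_congr rfl fun i hi => ?_
      have : n - i + 1 = n + 1 - i := by
        have := mem_range.mp hi; omega
      rw [this]; ring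
    rw [hsplit]
    have hext : ∑ i ∈ range (n + 1), (n.choose i : ℝ) * (u i * v (n + 1 - i))
        = ∑ i ∈ range (n + 2), (n.choose i : ℝ) * (u i * v (n + 1 - i)) := by
      rw [sum_range_succ (fun i => (n.choose i : ℝ) * (u i * v (n + 1 - i))) (n + 1)]
      simp [Nat.choose_succ_self]
    rw [hext]
    rw [sum_range_succ' (fun i => ((n + 1).choose i : ℝ) * (u i * v (n + 1 - i))) (n + 1)]
    rw [sum_range_succ' (fun i => (n.choose i : ℝ) * (u i * v (n + 1 - i))) (n + 1)]
    simp only [Nat.choose_succ_succ, Nat.cast_add, Nat.choose_zero_right]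
    have key : (∑ i ∈ range (n + 1), (n.choose i : ℝ) * (u (i + 1) * v (n - i)))
        + ∑ i ∈ range (n + 1), (n.choose (i + 1) : ℝ) * (u (i + 1) * v (n + 1 - (i + 1)))
        = ∑ i ∈ range (n + 1),
            ((n.choose i : ℝ) + (n.choose (i + 1) : ℝ)) * (u (i + 1) * v (n + 1 - (i + 1))) := by
      rw [← sum_add_distrib]
      refine sum_congr rfl fun i hi => ?_
      have h' : n + 1 - (i + 1) = n - i := by omega
      rw [h']; ring
    rw [← add_assoc, key]



lemma sum_even_odd (f : ℕ → ℝ) (n : ℕ) :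
    ∑ k ∈ range (2 * n + 1), f k
      = (∑ m ∈ range (n + 1), f (2 * m)) + ∑ m ∈ range n, f (2 * m + 1) := by
  induction n with
  | zero => simp
  | succ n ih =>
    have h2 : 2 * (n + 1) + 1 = (2 * n + 1) + 1 + 1 := by ring
    rw [h2, sum_range_succ, sum_range_succ, ih, sum_range_succ (fun m => f (2 * m)) (n + 1),
      sum_range_succ (fun m => f (2 * m + 1)) n]
    have e1 : 2 * n + 1 + 1 = 2 * (n + 1) := by ring
    rw [e1]
    ring

lemma demoivre_sum (n : ℕ) (φ : ℝ) :
    ∑ i ∈ range (n + 1),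
        (-1 : ℝ) ^ i * ((2 * n).choose (2 * i)) * sin φ ^ (2 * (n - i)) * cos φ ^ (2 * i)
      = (-1) ^ n * Real.cos (2 * n * φ) := by
  have hdm : (Complex.cos φ + Complex.sin φ * Complex.I) ^ (2 * n)
      = Complex.cos (2 * n * φ) + Complex.sin (2 * n * φ) * Complex.I := by
    rw [← Complex.exp_mul_I, ← Complex.exp_nat_mul, ← Complex.exp_mul_I]
    push_cast
    ring_nf
  have hre : ((Complex.cos φ + Complex.sin φ * Complex.I) ^ (2 * n)).re
      = Real.cos (2 * n * φ) := by
    rw [hdm]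
    have h' : (2 * (n : ℂ) * (φ : ℂ)) = ((2 * n * φ : ℝ) : ℂ) := by push_cast; ring
    rw [h', ← Complex.ofReal_cos, ← Complex.ofReal_sin, Complex.add_re, Complex.ofReal_re,
      Complex.mul_I_re, Complex.ofReal_im, neg_zero, add_zero]
  rw [add_pow, Complex.re_sum] at hre
  rw [sum_even_odd (fun k => ((Complex.cos φ ^ k * (Complex.sin φ * Complex.I) ^ (2 * n - k)
      * ((2 * n).choose k : ℂ)).re)) n] at hre
  have hodd : ∀ m ∈ range n, (Complex.cos φ ^ (2 * m + 1)
      * (Complex.sin φ * Complex.I) ^ (2 * n - (2 * m + 1))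
      * ((2 * n).choose (2 * m + 1) : ℂ)).re = 0 := by
    intro m hm
    have hmn : m < n := mem_range.mp hm
    have h1 : 2 * n - (2 * m + 1) = 2 * (n - m - 1) + 1 := by omega
    rw [h1, mul_pow, pow_succ Complex.I, pow_mul Complex.I, Complex.I_sq]
    rw [← Complex.ofReal_cos, ← Complex.ofReal_sin]
    have h2 : (Real.cos φ : ℂ) ^ (2 * m + 1) * ((Real.sin φ : ℂ) ^ (2 * (n - m - 1) + 1)
        * ((-1 : ℂ) ^ (n - m - 1) * Complex.I)) * ((2 * n).choose (2 * m + 1) : ℂ)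
        = (((Real.cos φ ^ (2 * m + 1) * Real.sin φ ^ (2 * (n - m - 1) + 1)
            * (-1 : ℝ) ^ (n - m - 1) * ((2 * n).choose (2 * m + 1) : ℝ)) : ℝ) : ℂ)
          * Complex.I := by
      push_cast; ring
    rw [h2, Complex.mul_I_re, Complex.ofReal_im, neg_zero]
  rw [sum_congr rfl hodd] at hre
  simp only [sum_const_zero, add_zero] at hre
  have heven : ∀ m ∈ range (n + 1), (Complex.cos φ ^ (2 * m)
      * (Complex.sin φ * Complex.I) ^ (2 * n - 2 * m)
      * ((2 * n).choose (2 * m) : ℂ)).re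
      = (-1 : ℝ) ^ (n - m) * ((2 * n).choose (2 * m))
          * Real.sin φ ^ (2 * (n - m)) * Real.cos φ ^ (2 * m) := by
    intro m hm
    have hmn : m ≤ n := Nat.lt_succ_iff.mp (mem_range.mp hm)
    have h1 : 2 * n - 2 * m = 2 * (n - m) := by omega
    rw [h1, mul_pow, pow_mul Complex.I, Complex.I_sq]
    rw [← Complex.ofReal_cos, ← Complex.ofReal_sin]
    have : (Real.cos φ : ℂ) ^ (2 * m) * ((Real.sin φ : ℂ) ^ (2 * (n - m))
        * (-1 : ℂ) ^ (n - m)) * ((2 * n).choose (2 * m) : ℂ)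
        = (((- 1 : ℝ) ^ (n - m) * ((2 * n).choose (2 * m)) * Real.sin φ ^ (2 * (n - m))
            * Real.cos φ ^ (2 * m) : ℝ) : ℂ) := by
      push_cast; ring
    rw [this, Complex.ofReal_re]
  rw [sum_congr rfl heven] at hre
  rw [← hre, mul_sum]
  refine sum_congr rfl fun i hi => ?_
  have hin : i ≤ n := Nat.lt_succ_iff.mp (mem_range.mp hi)
  have hs : (-1 : ℝ) ^ n * (-1 : ℝ) ^ (n - i) = (-1) ^ i := by
    rw [← pow_add]
    have h2 : n + (n - i) = 2 * (n - i) + i := by omega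
    rw [h2, pow_add, pow_mul]
    norm_num
  calc (-1 : ℝ) ^ i * ((2 * n).choose (2 * i)) * sin φ ^ (2 * (n - i)) * cos φ ^ (2 * i)
      = ((-1 : ℝ) ^ n * (-1 : ℝ) ^ (n - i)) * ((2 * n).choose (2 * i))
          * sin φ ^ (2 * (n - i)) * cos φ ^ (2 * i) := by rw [hs]
    _ = (-1 : ℝ) ^ n * ((-1 : ℝ) ^ (n - i) * ((2 * n).choose (2 * i))
          * sin φ ^ (2 * (n - i)) * cos φ ^ (2 * i)) := by ring



lemma prod_half_factorial (n : ℕ) : ∀ i ≤ n,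
    (∏ j ∈ range i, ((n : ℝ) - 1 / 2 - j))
      = ((2 * n).factorial : ℝ) * ((n - i).factorial : ℝ)
        / (4 ^ i * (n.factorial : ℝ) * ((2 * n - 2 * i).factorial : ℝ)) := by
  intro i
  induction i with
  | zero =>
    intro _
    have h0 : ((2 * n).factorial : ℝ) ≠ 0 := Nat.cast_ne_zero.mpr (Nat.factorial_ne_zero _)
    have h1 : (n.factorial : ℝ) ≠ 0 := Nat.cast_ne_zero.mpr (Nat.factorial_ne_zero _)
    simp
    field_simp
  | succ i ih =>
    intro hi
    have hi' : i ≤ n := by omega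
    obtain ⟨m, hm⟩ : ∃ m, n - i = m + 1 := ⟨n - i - 1, by omega⟩
    have e1 : n - (i + 1) = m := by omega
    have e2 : 2 * n - 2 * i = 2 * m + 2 := by omega
    have e3 : 2 * n - 2 * (i + 1) = 2 * m := by omega
    have ecast : (n : ℝ) - i = (m : ℝ) + 1 := by
      have : ((n - i : ℕ) : ℝ) = (m : ℝ) + 1 := by rw [hm]; push_cast; ring
      rw [← this, Nat.cast_sub hi']
    rw [prod_range_succ, ih hi', hm, e1, e2, e3]
    have f1 : ((m + 1).factorial : ℝ) = (m + 1) * (m.factorial : ℝ) := by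
      rw [Nat.factorial_succ]; push_cast; ring
    have f2 : ((2 * m + 2).factorial : ℝ)
        = (2 * m + 2) * ((2 * m + 1) * ((2 * m).factorial : ℝ)) := by
      rw [show 2 * m + 2 = (2 * m + 1) + 1 from rfl, Nat.factorial_succ, Nat.factorial_succ]
      push_cast; ring
    have h1 : (n.factorial : ℝ) ≠ 0 := Nat.cast_ne_zero.mpr (Nat.factorial_ne_zero _)
    have h2 : ((2 * m).factorial : ℝ) ≠ 0 := Nat.cast_ne_zero.mpr (Nat.factorial_ne_zero _)
    have h3 : (4 : ℝ) ^ i ≠ 0 := by positivity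
    have h4 : ((n : ℝ) - 1 / 2 - i) = (m : ℝ) + 1 / 2 := by rw [sub_sub, add_comm (1/2 : ℝ), ← sub_sub, ecast]; ring
    rw [f1, f2, h4, pow_succ]
    field_simp
    ring

lemma coeff_eq (n i : ℕ) (hi : i ≤ n) :
    (n.choose i : ℝ) * (∏ j ∈ range i, ((n : ℝ) - 1 / 2 - j))
        * (∏ j ∈ range (n - i), ((n : ℝ) - 1 / 2 - j))
      = ((2 * n).factorial : ℝ) / (4 ^ n * (n.factorial : ℝ))
          * (((2 * n).choose (2 * i)) : ℝ) := by
  have h1 := prod_half_factorial n i hi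
  have h2 := prod_half_factorial n (n - i) (Nat.sub_le n i)
  have e1 : n - (n - i) = i := by omega
  have e2 : 2 * n - 2 * (n - i) = 2 * i := by omega
  rw [h1, h2, e1, e2]
  have hc1 : (n.choose i : ℝ) = (n.factorial : ℝ) / ((i.factorial : ℝ) * ((n - i).factorial : ℝ)) :=
    Nat.cast_choose ℝ hi
  have hc2 : (((2 * n).choose (2 * i)) : ℝ)
      = ((2 * n).factorial : ℝ) / (((2 * i).factorial : ℝ) * ((2 * n - 2 * i).factorial : ℝ)) :=
    Nat.cast_choose ℝ (by omega)
  rw [hc1, hc2]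
  have hp : (4 : ℝ) ^ i * 4 ^ (n - i) = 4 ^ n := by
    rw [← pow_add]; congr 1; omega
  have n1 : (n.factorial : ℝ) ≠ 0 := Nat.cast_ne_zero.mpr (Nat.factorial_ne_zero _)
  have n2 : (i.factorial : ℝ) ≠ 0 := Nat.cast_ne_zero.mpr (Nat.factorial_ne_zero _)
  have n3 : ((n - i).factorial : ℝ) ≠ 0 := Nat.cast_ne_zero.mpr (Nat.factorial_ne_zero _)
  have n4 : ((2 * i).factorial : ℝ) ≠ 0 := Nat.cast_ne_zero.mpr (Nat.factorial_ne_zero _)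
  have n5 : ((2 * n - 2 * i).factorial : ℝ) ≠ 0 := Nat.cast_ne_zero.mpr (Nat.factorial_ne_zero _)
  have n6 : (4 : ℝ) ^ i ≠ 0 := by positivity
  have n7 : (4 : ℝ) ^ (n - i) ≠ 0 := by positivity
  have n8 : (4 : ℝ) ^ n ≠ 0 := by positivity
  field_simp
  rw [← hp]


/-- the Chebyshev polynomials of the first kind satisfy the
Rodrigues-type formula
`T_n(x) = (2^n (-1)^n n!/(2n)!) (1-x²)^{1/2} dⁿ/dxⁿ[(1-x²)^{n-1/2}]`
for `-1 < x < 1`. -/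
theorem chebyshev_rodrigues (n : ℕ) (x : ℝ) (hx : -1 < x) (hx' : x < 1) :
    (Polynomial.Chebyshev.T ℝ n).eval x =
      (2 ^ n * (-1 : ℝ) ^ n * (n.factorial : ℝ) / ((2 * n).factorial : ℝ)) *
        (1 - x ^ 2) ^ ((1 : ℝ) / 2) *
        iteratedDeriv n (fun t : ℝ => (1 - t ^ 2) ^ ((n : ℝ) - 1 / 2)) x := by
  set p : ℝ := (n : ℝ) - 1 / 2 with hp
  have hx1 : (0:ℝ) < 1 - x := by linarith
  have hx2 : (0:ℝ) < 1 + x := by linarith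
  have hU : IsOpen (Set.Ioo (-1:ℝ) 1) := isOpen_Ioo
  have hxU : x ∈ Set.Ioo (-1:ℝ) 1 := ⟨hx, hx'⟩
  have hfd : ∀ k, ∀ y ∈ Set.Ioo (-1:ℝ) 1,
      DifferentiableAt ℝ (iteratedDeriv k (fun t : ℝ => (1 - t) ^ p)) y := by
    intro k y hy
    have hev : iteratedDeriv k (fun t : ℝ => (1 - t) ^ p) =ᶠ[nhds y]
        fun z => (-1) ^ k * (∏ j ∈ range k, (p - j)) * (1 - z) ^ (p - k) := by
      filter_upwards [Iio_mem_nhds hy.2] with z hz using iter_one_sub p k hz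
    exact hev.differentiableAt_iff.mpr
      (((hasDerivAt_one_sub_rpow (p - k) hy.2).const_mul _).differentiableAt)
  have hgd : ∀ k, ∀ y ∈ Set.Ioo (-1:ℝ) 1,
      DifferentiableAt ℝ (iteratedDeriv k (fun t : ℝ => (1 + t) ^ p)) y := by
    intro k y hy
    have hev : iteratedDeriv k (fun t : ℝ => (1 + t) ^ p) =ᶠ[nhds y]
        fun z => (∏ j ∈ range k, (p - j)) * (1 + z) ^ (p - k) := by
      filter_upwards [Ioi_mem_nhds hy.1] with z hz using iter_one_add p k hz
    exact hev.differentiableAt_iff.mpr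
      (((hasDerivAt_one_add_rpow (p - k) hy.1).const_mul _).differentiableAt)
  have hprod : iteratedDeriv n (fun t : ℝ => (1 - t ^ 2) ^ p) x
      = iteratedDeriv n (fun t => (1 - t) ^ p * (1 + t) ^ p) x := by
    apply Filter.EventuallyEq.iteratedDeriv_eq
    filter_upwards [hU.mem_nhds hxU] with t ht
    rw [show (1 - t ^ 2 : ℝ) = (1 - t) * (1 + t) by ring,
      Real.mul_rpow (by nlinarith [ht.2] : (0:ℝ) ≤ 1 - t) (by nlinarith [ht.1] : (0:ℝ) ≤ 1 + t)]
  rw [hprod, leibniz_aux hU _ _ hfd hgd n x hxU]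
  -- trig setup
  set θ : ℝ := Real.arccos x with hθ
  have hcosx : Real.cos θ = x := Real.cos_arccos hx.le hx'.le
  set s : ℝ := Real.sin (θ / 2) with hs
  set c : ℝ := Real.cos (θ / 2) with hc
  have hsc : s ^ 2 + c ^ 2 = 1 := Real.sin_sq_add_cos_sq (θ / 2)
  have hcos2 : Real.cos (2 * (θ / 2)) = 2 * c ^ 2 - 1 := Real.cos_two_mul (θ / 2)
  have hcosθ : Real.cos θ = 2 * c ^ 2 - 1 := by rw [← hcos2]; congr 1; ring
  have hxs : 1 - x = 2 * s ^ 2 := by rw [← hcosx, hcosθ]; nlinarith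
  have hxc : 1 + x = 2 * c ^ 2 := by rw [← hcosx, hcosθ]; ring
  set A : ℝ := ((2 * n).factorial : ℝ) / (4 ^ n * (n.factorial : ℝ)) with hA
  set B : ℝ := (1 - x) ^ (-(1/2) : ℝ) * (1 + x) ^ (-(1/2) : ℝ) with hB
  have hterm : ∀ i ∈ range (n + 1),
      (n.choose i : ℝ) * (iteratedDeriv i (fun t : ℝ => (1 - t) ^ p) x
        * iteratedDeriv (n - i) (fun t : ℝ => (1 + t) ^ p) x)
      = ((-1 : ℝ) ^ i * ((2 * n).choose (2 * i)) * s ^ (2 * (n - i)) * c ^ (2 * i))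
          * (A * 2 ^ n * B) := by
    intro i hi
    have hin : i ≤ n := Nat.lt_succ_iff.mp (mem_range.mp hi)
    rw [iter_one_sub p i hx', iter_one_add p (n - i) hx]
    have hpi : p - (i : ℝ) = ((n - i : ℕ) : ℝ) + (-(1/2) : ℝ) := by
      rw [Nat.cast_sub hin, hp]; ring
    have hpn : p - ((n - i : ℕ) : ℝ) = (i : ℝ) + (-(1/2) : ℝ) := by
      rw [Nat.cast_sub hin, hp]; ring
    rw [hpi, hpn, Real.rpow_add hx1, Real.rpow_add hx2, Real.rpow_natCast, Real.rpow_natCast]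
    have h1x : (1 - x) ^ (n - i) = 2 ^ (n - i) * s ^ (2 * (n - i)) := by
      rw [hxs, mul_pow, ← pow_mul]
    have h2x : (1 + x) ^ i = 2 ^ i * c ^ (2 * i) := by
      rw [hxc, mul_pow, ← pow_mul]
    rw [h1x, h2x]
    have h2n : (2 : ℝ) ^ (n - i) * 2 ^ i = 2 ^ n := by
      rw [← pow_add]; congr 1; omega
    calc (n.choose i : ℝ) * ((-1) ^ i * (∏ j ∈ range i, (p - j))
            * (2 ^ (n - i) * s ^ (2 * (n - i)) * (1 - x) ^ (-(1/2) : ℝ))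
          * ((∏ j ∈ range (n - i), (p - j)) * (2 ^ i * c ^ (2 * i) * (1 + x) ^ (-(1/2) : ℝ))))
        = ((n.choose i : ℝ) * (∏ j ∈ range i, (p - j)) * (∏ j ∈ range (n - i), (p - j)))
            * ((-1) ^ i * s ^ (2 * (n - i)) * c ^ (2 * i)
              * ((2 : ℝ) ^ (n - i) * 2 ^ i) * B) := by rw [hB]; ring
      _ = (A * (((2 * n).choose (2 * i)) : ℝ))
            * ((-1) ^ i * s ^ (2 * (n - i)) * c ^ (2 * i) * (2 : ℝ) ^ n * B) := by
            rw [hp] at *; rw [coeff_eq n i hin, h2n, hA]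
      _ = ((-1 : ℝ) ^ i * ((2 * n).choose (2 * i)) * s ^ (2 * (n - i)) * c ^ (2 * i))
            * (A * 2 ^ n * B) := by ring
  rw [sum_congr rfl hterm, ← sum_mul]
  have hdem := demoivre_sum n (θ / 2)
  rw [← hs, ← hc] at hdem
  rw [hdem]
  have hcosn : Real.cos (2 * n * (θ / 2)) = Real.cos (n * θ) := by ring_nf
  rw [hcosn]
  rw [← hcosx, Polynomial.Chebyshev.T_real_cos θ (n : ℤ)]
  push_cast
  -- now pure arithmetic with rpow-one identity
  have hone : (1 - Real.cos θ ^ 2) ^ ((1:ℝ)/2) * B = 1 := by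
    rw [hcosx, hB]
    rw [show (1 - x ^ 2 : ℝ) = (1 - x) * (1 + x) by ring, Real.mul_rpow hx1.le hx2.le]
    rw [show (1 - x) ^ ((1:ℝ)/2) * (1 + x) ^ ((1:ℝ)/2)
        * ((1 - x) ^ (-(1/2) : ℝ) * (1 + x) ^ (-(1/2) : ℝ))
      = ((1 - x) ^ ((1:ℝ)/2) * (1 - x) ^ (-(1/2) : ℝ))
        * ((1 + x) ^ ((1:ℝ)/2) * (1 + x) ^ (-(1/2) : ℝ)) from by ring]
    rw [← Real.rpow_add hx1, ← Real.rpow_add hx2]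
    norm_num
  have hfac1 : ((2 * n).factorial : ℝ) ≠ 0 := Nat.cast_ne_zero.mpr (Nat.factorial_ne_zero _)
  have hfac2 : (n.factorial : ℝ) ≠ 0 := Nat.cast_ne_zero.mpr (Nat.factorial_ne_zero _)
  have hsgn : ((-1 : ℝ)) ^ n * (-1) ^ n = 1 := by rw [← mul_pow]; norm_num
  have h4 : (4 : ℝ) ^ n = 2 ^ n * 2 ^ n := by rw [← mul_pow]; norm_num
  have hK : (2 ^ n * (-1 : ℝ) ^ n * (n.factorial : ℝ) / ((2 * n).factorial : ℝ))
      * A * 2 ^ n * (-1) ^ n = 1 := by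
    have e : (2 ^ n * (-1 : ℝ) ^ n * (n.factorial : ℝ) / ((2 * n).factorial : ℝ))
        * A * 2 ^ n * (-1) ^ n
      = ((-1 : ℝ) ^ n * (-1) ^ n) * ((2 ^ n * 2 ^ n) / 4 ^ n)
          * ((n.factorial : ℝ) / (n.factorial : ℝ))
          * (((2 * n).factorial : ℝ) / ((2 * n).factorial : ℝ)) := by
      rw [hA]; field_simp
    rw [e, hsgn, ← h4, div_self (by positivity : (4:ℝ) ^ n ≠ 0), div_self hfac1, div_self hfac2]
    norm_num
  calc Real.cos ((n : ℝ) * θ)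
      = ((2 ^ n * (-1 : ℝ) ^ n * (n.factorial : ℝ) / ((2 * n).factorial : ℝ))
          * A * 2 ^ n * (-1) ^ n) * Real.cos ((n : ℝ) * θ)
          * ((1 - Real.cos θ ^ 2) ^ ((1:ℝ)/2) * B) := by rw [hK, hone]; ring
    _ = 2 ^ n * (-1 : ℝ) ^ n * (n.factorial : ℝ) / ((2 * n).factorial : ℝ)
          * (1 - Real.cos θ ^ 2) ^ ((1:ℝ)/2)
          * ((-1 : ℝ) ^ n * Real.cos ((n:ℝ) * θ) * (A * 2 ^ n * B)) := by ring
end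
end
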